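/- Let r < b < μ. Let y : [0, w_l] → ℝ be continuously differentiable and satisfy σ²w²(y′(w) − 1) = −2λy(w)² + 2(μw − c)y(w) for all w ∈ [0, w_l], with y(0) = −c/λ and y(w_l) = −(1/d)·(c/r − w_l). Then there exists a unique w_b ∈ (0, w_l) such that y(w_b) = ((μ+b)/(2λ))·w_b − c/λ, i.e., y(w_b) = z_b(w_b) where z_b(w) := ((μ+b)/(2λ))w − c/λ. -/

import Mathlib

open Set Filter Topology

private lemma no_double_zero' {wl : ℝ} (g h k : ℝ → ℝ)
    (hg : ∀ w ∈ Set.Ioo (0:ℝ) wl, HasDerivAt g (h w + k w * g w) w)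
    (hk : ContinuousOn k (Set.Ioo 0 wl))
    (hgc : ContinuousOn g (Set.Icc 0 wl))
    (hmono : StrictMonoOn h (Set.Ioo 0 wl))
    (hgl : g wl < 0)
    {a b : ℝ} (ha : a ∈ Set.Ioo 0 wl) (hb : b ∈ Set.Ioo 0 wl)
    (hga : g a = 0) (hgb : g b = 0) (hab : a < b) : False := by
  set Z : Set ℝ := {w ∈ Set.Icc a wl | g w = 0} with hZ
  have hZne : Z.Nonempty := ⟨a, ⟨le_rfl, ha.2.le⟩, hga⟩
  have hsub : Set.Icc a wl ⊆ Set.Icc 0 wl := Set.Icc_subset_Icc ha.1.le le_rfl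
  have hZclosed : IsClosed Z := by
    have : Z = Set.Icc a wl ∩ g ⁻¹' {0} := by
      ext w; exact Iff.rfl
    rw [this]
    exact (hgc.mono hsub).preimage_isClosed_of_isClosed isClosed_Icc isClosed_singleton
  have hZcomp : IsCompact Z := (isCompact_Icc (a := a) (b := wl)).of_isClosed_subset hZclosed
    (fun w hw => hw.1)
  obtain ⟨bs, hbs⟩ : ∃ bs, sSup Z = bs := ⟨_, rfl⟩
  have hbsZ : bs ∈ Z := hbs ▸ hZcomp.sSup_mem hZne
  have hbZ : b ∈ Z := ⟨⟨hab.le, hb.2.le⟩, hgb⟩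
  have hble : b ≤ bs := hbs ▸ le_csSup hZcomp.bddAbove hbZ
  have hbs_lt : bs < wl := lt_of_le_of_ne hbsZ.1.2 (fun heq => absurd (heq ▸ hbsZ.2) (ne_of_lt hgl))
  have hbs_mem : bs ∈ Set.Ioo 0 wl := ⟨lt_of_lt_of_le ha.1 (le_trans hab.le hble), hbs_lt⟩
  have habs : a < bs := lt_of_lt_of_le hab hble
  have hneg : ∀ t ∈ Set.Ioc bs wl, g t < 0 := by
    intro t ht
    rcases lt_trichotomy (g t) 0 with h1 | h1 | h1
    · exact h1
    · exact absurd (hbs ▸ le_csSup hZcomp.bddAbove (⟨⟨le_trans (le_trans hab.le hble) ht.1.le, ht.2⟩, h1⟩ : t ∈ Z)) (not_le.mpr ht.1)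
    · have hivt := intermediate_value_Ioo' (ht.2) (hgc.mono (Set.Icc_subset_Icc (le_trans ha.1.le (le_trans (le_trans hab.le hble) ht.1.le)) le_rfl))
      have h0 : (0:ℝ) ∈ Set.Ioo (g wl) (g t) := ⟨hgl, h1⟩
      obtain ⟨s, hsmem, hgs⟩ := hivt h0
      have : s ∈ Z := ⟨⟨le_trans (le_trans hab.le hble) (le_trans ht.1.le hsmem.1.le), hsmem.2.le⟩, hgs⟩
      exact absurd (hbs ▸ le_csSup hZcomp.bddAbove this) (not_le.mpr (lt_trans ht.1 hsmem.1))
  have hgbs : g bs = 0 := hbsZ.2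
  have hdbs : HasDerivAt g (h bs) bs := by
    have := hg bs hbs_mem
    rwa [hgbs, mul_zero, add_zero] at this
  have hhbs : h bs ≤ 0 := by
    by_contra hpos
    push_neg at hpos
    have hslope : Tendsto (slope g bs) (𝓝[>] bs) (𝓝 (h bs)) :=
      (hasDerivAt_iff_tendsto_slope.mp hdbs).mono_left
        (nhdsWithin_mono _ (fun x hx => ne_of_gt hx))
    have hev1 : ∀ᶠ w in 𝓝[>] bs, 0 < slope g bs w := hslope.eventually (eventually_gt_nhds hpos)
    have hev2 : Set.Ioo bs wl ∈ 𝓝[>] bs := Ioo_mem_nhdsGT_of_mem ⟨le_rfl, hbs_lt⟩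
    obtain ⟨w, hw1, hw2⟩ := (hev1.and (eventually_mem_nhdsWithin.mono (fun w hw => hw))).and
      (eventually_of_mem hev2 (fun w hw => hw)) |>.exists
    obtain ⟨hslope_pos, _⟩ := hw1
    have hwgt : bs < w := hw2.1
    rw [slope_def_field, hgbs, sub_zero] at hslope_pos
    have hgw : 0 < g w := by
      rcases div_pos_iff.mp hslope_pos with ⟨h1, _⟩ | ⟨_, h2⟩
      · exact h1
      · linarith [sub_pos.mpr hwgt]
    exact absurd hgw (not_lt.mpr (hneg w ⟨hwgt, hw2.2.le⟩).le)
  have hhneg : ∀ w ∈ Set.Ico a bs, h w < 0 := by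
    intro w hw
    have hwm : w ∈ Set.Ioo 0 wl := ⟨lt_of_lt_of_le ha.1 hw.1, lt_trans hw.2 hbs_lt⟩
    exact lt_of_lt_of_le (hmono hwm hbs_mem hw.2) hhbs
  set K : ℝ → ℝ := fun w => ∫ t in a..w, k t with hK
  have hIccsub : Set.Icc a bs ⊆ Set.Ioo 0 wl := fun w hw =>
    ⟨lt_of_lt_of_le ha.1 hw.1, lt_of_le_of_lt hw.2 hbs_lt⟩
  have hKd : ∀ w ∈ Set.Icc a bs, HasDerivAt K (k w) w := by
    intro w hw
    have hcw : ContinuousAt k w := hk.continuousAt (isOpen_Ioo.mem_nhds (hIccsub hw))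
    have hint : IntervalIntegrable k MeasureTheory.volume a w := by
      apply (hk.mono _).intervalIntegrable
      rw [Set.uIcc_of_le hw.1]
      exact fun t ht => hIccsub ⟨ht.1, le_trans ht.2 hw.2⟩
    exact intervalIntegral.integral_hasDerivAt_right hint
      (hk.stronglyMeasurableAtFilter isOpen_Ioo w (hIccsub hw)) hcw
  set G : ℝ → ℝ := fun w => g w * Real.exp (-K w) with hG
  have hGd : ∀ w ∈ Set.Icc a bs, HasDerivAt G (h w * Real.exp (-K w)) w := by
    intro w hw
    have h1 : HasDerivAt g (h w + k w * g w) w := hg w (hIccsub hw)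
    have h2 := ((hKd w hw).neg).exp
    have := h1.mul h2
    exact this.congr_deriv (by rw [Pi.neg_apply]; ring)
  have hGcont : ContinuousOn G (Set.Icc a bs) :=
    fun w hw => (hGd w hw).continuousAt.continuousWithinAt
  have hGanti : StrictAntiOn G (Set.Icc a bs) := by
    apply strictAntiOn_of_deriv_neg (convex_Icc a bs) hGcont
    intro w hw
    rw [interior_Icc] at hw
    rw [(hGd w ⟨hw.1.le, hw.2.le⟩).deriv]
    exact mul_neg_of_neg_of_pos (hhneg w ⟨hw.1.le, hw.2⟩) (Real.exp_pos _)
  have := hGanti (Set.left_mem_Icc.mpr habs.le) (Set.right_mem_Icc.mpr habs.le) habs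
  rw [hG] at this
  simp only [hga, hgbs, zero_mul] at this
  exact lt_irrefl 0 this

set_option maxHeartbeats 2000000 in
theorem stmt_14 (r mu sigma lam c b m d x wl : ℝ)
    (hr : 0 < r) (hmu : r < mu) (hs : 0 < sigma) (hlam : 0 < lam) (hc : 0 < c)
    (hb1 : r < b) (hb2 : b < mu)
    (hm : m = (mu - r)^2 / (2 * sigma^2))
    (hd : d = ((r + lam + m) + Real.sqrt ((r + lam + m)^2 - 4*r*lam)) / (2*r))
    (hx : x = (mu - r) / (sigma^2 * (d - 1)))
    (hwl : wl = (x / (1 + x)) * (c / r))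
    (y : ℝ → ℝ)
    (hC1 : ContDiffOn ℝ 1 y (Set.Icc 0 wl))
    (hode : ∀ w ∈ Set.Icc 0 wl,
      sigma^2 * w^2 * (deriv y w - 1) = -2 * lam * (y w)^2 + 2 * (mu * w - c) * y w)
    (hy0 : y 0 = -c / lam)
    (hyl : y wl = -(1/d) * (c/r - wl)) :
    ∃! wb : ℝ, wb ∈ Set.Ioo 0 wl ∧ y wb = ((mu + b) / (2 * lam)) * wb - c / lam := by
  -- ALGEBRAIC PRELIMINARIES
  have hs2 : (0:ℝ) < sigma^2 := by positivity
  have hmpos : 0 < m := by rw [hm]; exact div_pos (pow_pos (by linarith) 2) (by positivity)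
  set s := Real.sqrt ((r + lam + m)^2 - 4*r*lam) with hsdef
  have hrad : 0 ≤ (r + lam + m)^2 - 4*r*lam := by nlinarith [sq_nonneg (r - lam), sq_nonneg m]
  have hsnn : 0 ≤ s := Real.sqrt_nonneg _
  have hss : s^2 = (r + lam + m)^2 - 4*r*lam := Real.sq_sqrt hrad
  have hd1 : 1 < d := by
    rw [hd, lt_div_iff₀ (by linarith : (0:ℝ) < 2*r)]
    nlinarith [hss, hsnn, mul_pos hr hmpos]
  have hquad : r*d^2 - (r+lam+m)*d + lam = 0 := by
    have h2r : (2*r) ≠ 0 := by positivity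
    have : 2*r*d = (r+lam+m) + s := by rw [hd]; field_simp
    nlinarith [hss, this]
  have hdm : d - 1 ≠ 0 := by linarith
  have hmur : mu - r = x * (sigma^2 * (d-1)) := by
    rw [hx]; field_simp
  have hxpos : 0 < x := by
    rw [hx]; exact div_pos (by linarith) (mul_pos hs2 (by linarith))
  have hwlpos : 0 < wl := by rw [hwl]; positivity
  have hmx : m = (mu - r)*x*(d-1)/2 := by
    rw [hm, hmur]; field_simp
  have hkey : x*(mu-r) = 2*(r*d - lam - m) := by
    have h1 : (r*d - lam - m)*(d-1) = m := by linear_combination hquad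
    have h2 : (x*(mu-r)) * (d-1) = (2*(r*d-lam-m))*(d-1) := by
      linear_combination (-2)*h1 + (-2)*hmx
    exact mul_right_cancel₀ hdm h2
  have hgwl : ((mu + b) / (2 * lam))*wl - c/lam - (-(1/d) * (c/r - wl)) = c*x*(b-r)/(2*lam*(1+x)*r) := by
    rw [hwl]
    have h1x : (1:ℝ) + x ≠ 0 := by linarith
    have hd0 : d ≠ 0 := by linarith
    have hstep : (r*(1+x))*(2*d) - 2*lam - (mu+b)*x*d = x*(r-b)*d := by
      linear_combination (-d)*hkey + (-2)*hquad
    field_simp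
    linear_combination (-1) * hstep
  -- SETUP
  set A := (mu + b) / (2 * lam) with hA
  set gf : ℝ → ℝ := fun w => y w - (A*w - c/lam) with hgf
  set hf : ℝ → ℝ := fun w => 1 - A + A*(mu-b)/sigma^2 - c*(mu-b)/(lam*sigma^2*w) with hhf
  set kf : ℝ → ℝ := fun w => (-2*lam*(y w + (A*w - c/lam)) + 2*(mu*w - c))/(sigma^2*w^2) with hkf
  have hIoo_sub : Set.Ioo (0:ℝ) wl ⊆ Set.Icc 0 wl := Set.Ioo_subset_Icc_self
  have hycont : ContinuousOn y (Set.Icc 0 wl) := hC1.continuousOn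
  have hzbc : Continuous (fun w : ℝ => A*w - c/lam) := by fun_prop
  have hgcont : ContinuousOn gf (Set.Icc 0 wl) := hycont.sub hzbc.continuousOn
  have hdiffOn : DifferentiableOn ℝ y (Set.Icc 0 wl) := hC1.differentiableOn one_ne_zero
  -- derivative identity for gf
  have hg_deriv : ∀ w ∈ Set.Ioo (0:ℝ) wl, HasDerivAt gf (hf w + kf w * gf w) w := by
    intro w hw
    have hw0 : w ≠ 0 := ne_of_gt hw.1
    have hmemn : Set.Icc (0:ℝ) wl ∈ 𝓝 w := Icc_mem_nhds hw.1 hw.2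
    have hyd : HasDerivAt y (deriv y w) w :=
      ((hdiffOn w (hIoo_sub hw)).differentiableAt hmemn).hasDerivAt
    have hzd : HasDerivAt (fun u : ℝ => A*u - c/lam) A w := by
      simpa using ((hasDerivAt_id w).const_mul A).sub_const (c/lam)
    have hODE := hode w (hIoo_sub hw)
    have hdy : deriv y w = 1 + (-2*lam*(y w)^2 + 2*(mu*w - c)*(y w))/(sigma^2*w^2) := by
      field_simp
      linear_combination hODE
    have h3 : deriv y w - A = hf w + kf w * gf w := by
      rw [hdy]
      simp only [hhf, hkf, hgf, hA]
      field_simp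
      ring
    have := hyd.sub hzd
    rwa [h3] at this
  -- continuity of kf
  have hkcont : ContinuousOn kf (Set.Ioo 0 wl) := by
    rw [hkf]
    apply ContinuousOn.div
    · exact (continuousOn_const.mul ((hycont.mono hIoo_sub).add hzbc.continuousOn)).add
        (Continuous.continuousOn (by fun_prop))
    · exact Continuous.continuousOn (by fun_prop)
    · intro w hw
      exact ne_of_gt (mul_pos (pow_pos hs 2) (pow_pos hw.1 2))
  -- strict monotonicity of hf
  have hmono : StrictMonoOn hf (Set.Ioo 0 wl) := by
    intro u hu v hv huv
    rw [hhf]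
    have h1 : 0 < c*(mu-b) := mul_pos hc (by linarith)
    have h2 : 0 < lam*sigma^2*u := mul_pos (mul_pos hlam (pow_pos hs 2)) hu.1
    have h3 : lam*sigma^2*u < lam*sigma^2*v := by
      have := mul_pos hlam (pow_pos hs 2); nlinarith
    have := div_lt_div_of_pos_left h1 h2 h3
    simp only
    linarith
  -- the derivative of y at 0 equals mu/lam
  have hwl0 : (0:ℝ) ∈ Set.Icc 0 wl := ⟨le_rfl, hwlpos.le⟩
  have hUD : UniqueDiffOn ℝ (Set.Icc 0 wl) := uniqueDiffOn_Icc hwlpos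
  set L := derivWithin y (Set.Icc 0 wl) 0 with hLdef
  have hydw0 : HasDerivWithinAt y L (Set.Icc 0 wl) 0 := (hdiffOn 0 hwl0).hasDerivWithinAt
  have hNB : (𝓝[Set.Ioo (0:ℝ) wl] (0:ℝ)).NeBot := by
    rw [← mem_closure_iff_nhdsWithin_neBot, closure_Ioo (ne_of_lt hwlpos)]
    exact ⟨le_rfl, hwlpos.le⟩
  have hslope : Tendsto (slope y 0) (𝓝[Set.Ioo (0:ℝ) wl] 0) (𝓝 L) :=
    (hasDerivWithinAt_iff_tendsto_slope.mp hydw0).mono_left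
      (nhdsWithin_mono _ (fun t ht => ⟨hIoo_sub ht, by simp [ne_of_gt ht.1]⟩))
  have hdctsW : ContinuousOn (derivWithin y (Set.Icc 0 wl)) (Set.Icc 0 wl) :=
    hC1.continuousOn_derivWithin hUD le_rfl
  have htd : Tendsto (fun w => deriv y w) (𝓝[Set.Ioo (0:ℝ) wl] 0) (𝓝 L) := by
    have t1 : Tendsto (derivWithin y (Set.Icc 0 wl)) (𝓝[Set.Ioo (0:ℝ) wl] 0) (𝓝 L) :=
      (hdctsW 0 hwl0).mono_left (nhdsWithin_mono _ hIoo_sub)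
    apply t1.congr'
    filter_upwards [eventually_mem_nhdsWithin] with w hw
    exact derivWithin_of_mem_nhds (Icc_mem_nhds hw.1 hw.2)
  have hidy : Tendsto (fun w : ℝ => w) (𝓝[Set.Ioo (0:ℝ) wl] 0) (𝓝 0) :=
    tendsto_id.mono_left nhdsWithin_le_nhds
  have hLHS : Tendsto (fun w => (deriv y w - 1) * w) (𝓝[Set.Ioo (0:ℝ) wl] 0) (𝓝 0) := by
    have hsub : Tendsto (fun w => deriv y w - 1) (𝓝[Set.Ioo (0:ℝ) wl] 0) (𝓝 (L - 1)) :=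
      htd.sub tendsto_const_nhds
    have := hsub.mul hidy
    simpa using this
  have hyto : Tendsto y (𝓝[Set.Ioo (0:ℝ) wl] 0) (𝓝 (-c/lam)) := by
    have := (hycont 0 hwl0).mono_left (nhdsWithin_mono _ hIoo_sub)
    rwa [hy0] at this
  have hRHS : Tendsto (fun w => (y w * (2*mu - 2*lam * slope y 0 w))/sigma^2)
      (𝓝[Set.Ioo (0:ℝ) wl] 0) (𝓝 ((-c/lam) * (2*mu - 2*lam*L)/sigma^2)) :=
    (hyto.mul (tendsto_const_nhds.sub (hslope.const_mul _))).div_const _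
  have heqev : (fun w => (deriv y w - 1) * w) =ᶠ[𝓝[Set.Ioo (0:ℝ) wl] 0]
      (fun w => (y w * (2*mu - 2*lam * slope y 0 w))/sigma^2) := by
    filter_upwards [eventually_mem_nhdsWithin] with w hw
    have hw0 : w ≠ 0 := ne_of_gt hw.1
    have hODE := hode w (hIoo_sub hw)
    rw [slope_def_field, hy0]
    field_simp
    linear_combination hODE
  have h0eq : (0:ℝ) = (-c/lam) * (2*mu - 2*lam*L)/sigma^2 :=
    tendsto_nhds_unique (hLHS.congr' heqev) hRHS
  have hLval : L = mu/lam := by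
    have hcne : c ≠ 0 := ne_of_gt hc
    have hlne : lam ≠ 0 := ne_of_gt hlam
    have hsne : sigma ≠ 0 := ne_of_gt hs
    field_simp at h0eq
    have h2 : 2*mu - 2*lam*L = 0 := by
      have h3 : c * (2*mu - 2*lam*L) = 0 := by linear_combination h0eq
      rcases mul_eq_zero.mp h3 with h | h
      · exact absurd h hcne
      · exact h
    field_simp
    linarith
  -- gf is positive somewhere near 0
  have hzd0 : HasDerivAt (fun u : ℝ => A*u - c/lam) A 0 := by
    simpa using ((hasDerivAt_id (0:ℝ)).const_mul A).sub_const (c/lam)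
  have hgd0 : HasDerivWithinAt gf (L - A) (Set.Icc 0 wl) 0 :=
    hydw0.sub (hzd0.hasDerivWithinAt)
  have hslopeg : Tendsto (slope gf 0) (𝓝[Set.Ioo (0:ℝ) wl] 0) (𝓝 (L - A)) :=
    (hasDerivWithinAt_iff_tendsto_slope.mp hgd0).mono_left
      (nhdsWithin_mono _ (fun t ht => ⟨hIoo_sub ht, by simp [ne_of_gt ht.1]⟩))
  have hgf0 : gf 0 = 0 := by
    show y 0 - (A*0 - c/lam) = 0
    rw [hy0]; ring
  have hpos : 0 < L - A := by
    rw [hLval, hA, sub_pos, div_lt_div_iff₀ (by linarith) hlam]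
    nlinarith
  have hev := hslopeg.eventually (eventually_gt_nhds hpos)
  obtain ⟨w0, hsl0, hw0m⟩ := (hev.and eventually_mem_nhdsWithin).exists
  have hgfw0 : 0 < gf w0 := by
    rw [slope_def_field, hgf0, sub_zero, sub_zero] at hsl0
    rcases div_pos_iff.mp hsl0 with ⟨h1, _⟩ | ⟨_, h2⟩
    · exact h1
    · linarith [hw0m.1]
  -- gf is negative at wl
  have hgfwl : gf wl < 0 := by
    have hRpos : 0 < c*x*(b-r)/(2*lam*(1+x)*r) := by
      apply div_pos
      · exact mul_pos (mul_pos hc hxpos) (by linarith)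
      · positivity
    show y wl - (A*wl - c/lam) < 0
    rw [hyl, hA]
    linarith [hgwl]
  -- existence via IVT
  obtain ⟨wb, hwbm, hwb0⟩ := intermediate_value_Ioo' hw0m.2.le
    (hgcont.mono (Set.Icc_subset_Icc hw0m.1.le le_rfl)) ⟨hgfwl, hgfw0⟩
  have hwbIoo : wb ∈ Set.Ioo 0 wl := ⟨lt_trans hw0m.1 hwbm.1, hwbm.2⟩
  refine ⟨wb, ⟨hwbIoo, ?_⟩, ?_⟩
  · have : y wb - (A*wb - c/lam) = 0 := hwb0
    linarith
  · rintro w' ⟨hw'm, hw'val⟩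
    have hz' : gf w' = 0 := by
      show y w' - (A*w' - c/lam) = 0
      rw [hw'val]; ring
    rcases lt_trichotomy w' wb with hlt | heq | hgt
    · exact (no_double_zero' gf hf kf hg_deriv hkcont hgcont hmono hgfwl hw'm hwbIoo hz' hwb0 hlt).elim
    · exact heq
    · exact (no_double_zero' gf hf kf hg_deriv hkcont hgcont hmono hgfwl hwbIoo hw'm hwb0 hz' hgt).elim
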